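/- A stochastic map Φ on L¹(Ω, Σ, μ) is an isometry for the L¹ norm if and only if it preserves orthogonality of positive elements: whenever x, y ≥ 0 satisfy x·y = 0 a.e. (equivalently ‖x − y‖₁ = ‖x + y‖₁), then ‖Φx − Φy‖₁ = ‖Φx + Φy‖₁. -/

import Mathlib

open MeasureTheory

/-- A stochastic map `Φ` on `L¹(Ω, Σ, μ)` (positive, linear,
integral-preserving) is an isometry for the `L¹` norm if and only if it preserves
orthogonality of positive elements: whenever `x, y ≥ 0` satisfy `x · y = 0` a.e.,
then `‖Φx - Φy‖₁ = ‖Φx + Φy‖₁`. -/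
theorem stochastic_isometry_iff_orthogonality_preserving
    {Ω : Type*} [MeasurableSpace Ω] (μ : Measure Ω) [SigmaFinite μ]
    (Φ : Lp ℝ 1 μ →ₗ[ℝ] Lp ℝ 1 μ)
    (hpos : ∀ f : Lp ℝ 1 μ, 0 ≤ f → 0 ≤ Φ f)
    (hint : ∀ f : Lp ℝ 1 μ, ∫ a, (Φ f) a ∂μ = ∫ a, f a ∂μ) :
    (∀ z : Lp ℝ 1 μ, ‖Φ z‖ = ‖z‖) ↔
      (∀ x y : Lp ℝ 1 μ, 0 ≤ x → 0 ≤ y → (∀ᵐ a ∂μ, x a * y a = 0) →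
        ‖Φ x - Φ y‖ = ‖Φ x + Φ y‖) := by
  -- key: for 0 ≤ f, ‖f‖ = ∫ f
  have hnorm : ∀ f : Lp ℝ 1 μ, 0 ≤ f → ‖f‖ = ∫ a, f a ∂μ := by
    intro f hf
    rw [L1.norm_eq_integral_norm]
    refine integral_congr_ae ?_
    filter_upwards [(Lp.coeFn_nonneg f).2 hf] with a ha
    exact Real.norm_of_nonneg ha
  -- for nonneg orthogonal x y : ‖x - y‖ = ‖x + y‖
  have hdisj : ∀ x y : Lp ℝ 1 μ, 0 ≤ x → 0 ≤ y → (∀ᵐ a ∂μ, x a * y a = 0) →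
      ‖x - y‖ = ‖x + y‖ := by
    intro x y hx hy hxy
    rw [Lp.norm_def, Lp.norm_def]
    congr 1
    apply eLpNorm_congr_norm_ae
    filter_upwards [Lp.coeFn_sub x y, Lp.coeFn_add x y,
      (Lp.coeFn_nonneg x).2 hx, (Lp.coeFn_nonneg y).2 hy, hxy] with a h1 h2 hxa hya hxya
    rw [h1, h2, Pi.sub_apply, Pi.add_apply, Real.norm_eq_abs, Real.norm_eq_abs]
    rcases mul_eq_zero.1 hxya with h | h <;> simp [h, abs_of_nonneg, hxa, hya]
  constructor
  · intro hiso x y hx hy hxy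
    have h1 : Φ x - Φ y = Φ (x - y) := (map_sub Φ x y).symm
    have h2 : Φ x + Φ y = Φ (x + y) := (map_add Φ x y).symm
    rw [h1, h2, hiso, hiso]
    exact hdisj x y hx hy hxy
  · intro h z
    set x := Lp.posPart z with hxdef
    set y := Lp.negPart z with hydef
    have hx : 0 ≤ x := by
      rw [← Lp.coeFn_nonneg]
      filter_upwards [Lp.coeFn_posPart z] with a ha
      simp [hxdef, ha]
    have hy : 0 ≤ y := by
      rw [← Lp.coeFn_nonneg]
      filter_upwards [Lp.coeFn_negPart_eq_max z] with a ha
      simp [hydef, ha]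
    have hxy : ∀ᵐ a ∂μ, x a * y a = 0 := by
      filter_upwards [Lp.coeFn_posPart z, Lp.coeFn_negPart_eq_max z] with a h1 h2
      rw [h1, h2]
      rcases le_total (z a) 0 with h | h <;> simp [max_eq_right, max_eq_left, *, neg_nonneg,
        neg_nonpos]
    have hsub : x - y = z := by
      apply Lp.ext
      filter_upwards [Lp.coeFn_sub x y, Lp.coeFn_posPart z, Lp.coeFn_negPart_eq_max z]
        with a h1 h2 h3
      rw [h1, Pi.sub_apply, h2, h3]
      rcases le_total (z a) 0 with h | h <;> simp [max_eq_right, max_eq_left, *, neg_nonneg,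
        neg_nonpos]
    have hznorm : ‖z‖ = ‖x + y‖ := by
      rw [← hsub]
      exact hdisj x y hx hy hxy
    have hΦsum : 0 ≤ Φ x + Φ y := add_nonneg (hpos x hx) (hpos y hy)
    calc ‖Φ z‖ = ‖Φ x - Φ y‖ := by rw [← hsub, map_sub]
      _ = ‖Φ x + Φ y‖ := h x y hx hy hxy
      _ = ∫ a, (Φ x + Φ y) a ∂μ := hnorm _ hΦsum
      _ = ∫ a, (Φ (x + y)) a ∂μ := by rw [map_add]
      _ = ∫ a, (x + y) a ∂μ := hint _
      _ = ‖x + y‖ := (hnorm _ (add_nonneg hx hy)).symm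
      _ = ‖z‖ := hznorm.symm
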